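/- Let G be a finite group acting on a set X, and let S be a G-invariant subset of X such that the action map respects a decomposition of S as a disjoint union indexed by orbit representatives. If h is any additive invariant on G-sets (a function to an abelian group additive over disjoint unions and constant on isomorphism classes), then h(Fix_{Γ,G}(X)) = Σ_{[α] ∈ Hom(Γ,G)/G} h(G ×_{C_G(α(Γ))} X^{α(Γ)}). -/
import Mathlib


variable {Γ G X : Type*} [Group Γ] [Group G] [MulAction G X]

/-- `Fix_{Γ,G}(X) = {(α,x) : α(γ)•x = x for all γ}`. -/
def FixPts (Γ G X : Type*) [Group Γ] [Group G] [MulAction G X] : Type _ :=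
  {q : (Γ →* G) × X // ∀ γ : Γ, q.1 γ • q.2 = q.2}

/-- Conjugation of a homomorphism `α : Γ → G` by `g ∈ G`. -/
def conjHom (g : G) (α : Γ →* G) : Γ →* G :=
  ((MulAut.conj g).toMonoidHom).comp α

/-- The `G`-action on `Fix_{Γ,G}(X)`: `g • (α,x) = (gαg⁻¹, g•x)`. -/
def fixSmul (g : G) (q : FixPts Γ G X) : FixPts Γ G X :=
  ⟨(conjHom g q.1.1, g • q.1.2), by
    intro γ
    simp only [conjHom, MonoidHom.comp_apply, MulEquiv.coe_toMonoidHom, MulAut.conj_apply,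
      mul_smul, inv_smul_smul]
    rw [q.2 γ]⟩

/-- The conjugation equivalence relation on `Hom(Γ,G)`. -/
def conjSetoid (Γ G : Type*) [Group Γ] [Group G] : Setoid (Γ →* G) where
  r α β := ∃ g : G, β = conjHom g α
  iseqv := by
    constructor
    · exact fun α => ⟨1, by ext γ; simp [conjHom]⟩
    · rintro α β ⟨g, rfl⟩
      exact ⟨g⁻¹, by ext γ; simp [conjHom, mul_assoc]⟩
    · rintro α β δ ⟨g, rfl⟩ ⟨g', rfl⟩
      exact ⟨g' * g, by ext γ; simp [conjHom, mul_assoc]⟩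

/-- The fixed points `X^{α(Γ)}`. -/
def fixedByHom (α : Γ →* G) (X : Type*) [MulAction G X] : Type _ :=
  {x : X // ∀ γ : Γ, α γ • x = x}

/-- The action of the centralizer `C_G(α(Γ))` on `X^{α(Γ)}`. -/
def centAct (α : Γ →* G) (k : Subgroup.centralizer (Set.range α)) (x : fixedByHom α X) :
    fixedByHom α X :=
  ⟨(k : G) • x.1, by
    intro γ
    rw [smul_smul, k.2 (α γ) ⟨γ, rfl⟩, ← smul_smul, x.2 γ]⟩

/-- The induced `G`-set `G ×_K Y`: quotient of `G × Y` by `(gk, y) ~ (g, k·y)`. -/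
def IndGSet (K : Subgroup G) (Y : Type*) (act : K → Y → Y) : Type _ :=
  Quot (fun a b : G × Y => ∃ k : K, a.1 = b.1 * k ∧ b.2 = act k a.2)

/-- `G` acts on `G ×_K Y` by left multiplication on the first factor. -/
def indSmul (K : Subgroup G) (Y : Type*) (act : K → Y → Y) (g : G) :
    IndGSet K Y act → IndGSet K Y act :=
  Quot.map (fun a => (g * a.1, a.2)) (by
    rintro a b ⟨k, h1, h2⟩
    exact ⟨k, by simp only []; rw [h1, mul_assoc], h2⟩)

lemma conjHom_one (α : Γ →* G) : conjHom 1 α = α := by ext γ; simp [conjHom]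

lemma conjHom_mul (g g' : G) (α : Γ →* G) :
    conjHom (g * g') α = conjHom g (conjHom g' α) := by
  ext γ; simp [conjHom, mul_assoc]

universe u

/-- A `G`-set, packaged as a structure. -/
structure GSet (G : Type u) [Group G] : Type (u + 1) where
  carrier : Type u
  smul : G → carrier → carrier
  one_smul : ∀ x, smul 1 x = x
  mul_smul : ∀ g g' x, smul (g * g') x = smul g (smul g' x)

/-- `Fix_{Γ,G}(X)` as a `G`-set. -/
def fixGSet (Γ G X : Type u) [Group Γ] [Group G] [MulAction G X] : GSet G where
  carrier := FixPts Γ G X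
  smul := fixSmul
  one_smul := by
    rintro ⟨⟨α, x⟩, hx⟩
    apply Subtype.ext
    simp [fixSmul, conjHom_one]
  mul_smul := by
    rintro g g' ⟨⟨α, x⟩, hx⟩
    apply Subtype.ext
    simp [fixSmul, conjHom_mul, mul_smul]

/-- `G ×_{C_G(α(Γ))} X^{α(Γ)}` as a `G`-set. -/
def indGSet (Γ G X : Type u) [Group Γ] [Group G] [MulAction G X] (α : Γ →* G) : GSet G where
  carrier := IndGSet (Subgroup.centralizer (Set.range ⇑α)) (fixedByHom α X) (centAct α)
  smul := indSmul _ _ _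
  one_smul := by
    rintro x
    induction x using Quot.ind with
    | _ a => show Quot.mk _ (1 * a.1, a.2) = Quot.mk _ a; rw [one_mul]
  mul_smul := by
    rintro g g' x
    induction x using Quot.ind with
    | _ a =>
      show Quot.mk _ (g * g' * a.1, a.2) = Quot.mk _ (g * (g' * a.1), a.2)
      rw [mul_assoc]

section Aux

variable {Γ G X : Type u} [Group Γ] [Group G] [MulAction G X]

lemma conjHom_apply (g : G) (α : Γ →* G) (γ : Γ) : conjHom g α γ = g * α γ * g⁻¹ := rfl

lemma conjHom_cancel {g g' : G} {α : Γ →* G} (hc : conjHom g α = conjHom g' α) :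
    (g'⁻¹ * g) ∈ Subgroup.centralizer (Set.range ⇑α) := by
  intro s hs
  obtain ⟨γ, rfl⟩ := hs
  have h1 : g * α γ * g⁻¹ = g' * α γ * g'⁻¹ := by
    have := congrArg (fun β : Γ →* G => β γ) hc
    simpa [conjHom_apply] using this
  have h2 : g'⁻¹ * (g * α γ * g⁻¹) * g = g'⁻¹ * (g' * α γ * g'⁻¹) * g := by rw [h1]
  group at h2 ⊢
  rw [mul_assoc, mul_assoc, ← mul_assoc (α γ)]
  rw [← h2]
  group

lemma conj_classes_eq (g : G) (α : Γ →* G) :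
    Quotient.mk (conjSetoid Γ G) (conjHom g α) = Quotient.mk (conjSetoid Γ G) α := by
  apply Quotient.sound
  show ∃ g' : G, α = conjHom g' (conjHom g α)
  exact ⟨g⁻¹, by rw [← conjHom_mul, inv_mul_cancel, conjHom_one]⟩

/-- The fiber of `Fix_{Γ,G}(X)` over a conjugacy class `q`, as a `G`-set. -/
def fiberGSet (Γ G X : Type u) [Group Γ] [Group G] [MulAction G X]
    (q : Quotient (conjSetoid Γ G)) : GSet G where
  carrier := {p : FixPts Γ G X // Quotient.mk (conjSetoid Γ G) p.1.1 = q}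
  smul g p := ⟨fixSmul g p.1, by
    show Quotient.mk (conjSetoid Γ G) (conjHom g p.1.1.1) = q
    rw [conj_classes_eq, p.2]⟩
  one_smul := by
    rintro ⟨p, hp⟩
    exact Subtype.ext ((fixGSet Γ G X).one_smul p)
  mul_smul := by
    rintro g g' ⟨p, hp⟩
    exact Subtype.ext ((fixGSet Γ G X).mul_smul g g' p)

variable (Γ G X) in
/-- The raw map from `G × X^{α(Γ)}` to the fiber over `⟦α⟧`. -/
noncomputable def rawMap (q : Quotient (conjSetoid Γ G)) (a : G × fixedByHom (Quotient.out q) X) :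
    (fiberGSet Γ G X q).carrier :=
  ⟨⟨⟨conjHom a.1 (Quotient.out q), a.1 • a.2.1⟩, by
      intro γ
      show conjHom a.1 (Quotient.out q) γ • a.1 • a.2.1 = a.1 • a.2.1
      rw [conjHom_apply, mul_smul, mul_smul, inv_smul_smul, a.2.2 γ]⟩, by
    show Quotient.mk (conjSetoid Γ G) (conjHom a.1 (Quotient.out q)) = q
    rw [conj_classes_eq, Quotient.out_eq]⟩

variable (Γ G X) in
lemma rawMap_sound (q : Quotient (conjSetoid Γ G))
    (a b : G × fixedByHom (Quotient.out q) X)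
    (hab : ∃ k : Subgroup.centralizer (Set.range ⇑(Quotient.out q)),
      a.1 = b.1 * k ∧ b.2 = centAct (Quotient.out q) k a.2) :
    rawMap Γ G X q a = rawMap Γ G X q b := by
  obtain ⟨k, h1, h2⟩ := hab
  apply Subtype.ext; apply Subtype.ext
  show ((conjHom a.1 (Quotient.out q), a.1 • a.2.1) : (Γ →* G) × X)
      = (conjHom b.1 (Quotient.out q), b.1 • b.2.1)
  have hk : ∀ γ : Γ, (Quotient.out q) γ * k = k * (Quotient.out q) γ :=
    fun γ => k.2 ((Quotient.out q) γ) ⟨γ, rfl⟩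
  refine Prod.ext ?_ ?_
  · ext γ
    simp only [conjHom_apply, h1]
    rw [mul_assoc b.1, mul_assoc b.1, ← hk γ, mul_inv_rev]
    group
  · rw [h2]
    show a.1 • a.2.1 = b.1 • (k : G) • a.2.1
    rw [h1, mul_smul]

variable (Γ G X) in
/-- The `G`-equivariant map `G ×_{C} X^{α} → Fix`-fiber. -/
noncomputable def indToFiber (q : Quotient (conjSetoid Γ G)) :
    (indGSet Γ G X (Quotient.out q)).carrier → (fiberGSet Γ G X q).carrier :=
  Quot.lift (rawMap Γ G X q) (rawMap_sound Γ G X q)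

lemma indToFiber_bij (q : Quotient (conjSetoid Γ G)) :
    Function.Bijective (indToFiber Γ G X q) := by
  constructor
  · rintro x y hxy
    induction x using Quot.ind with | _ a => ?_
    induction y using Quot.ind with | _ b => ?_
    have hxy' : ((conjHom a.1 (Quotient.out q), a.1 • a.2.1) : (Γ →* G) × X)
        = (conjHom b.1 (Quotient.out q), b.1 • b.2.1) :=
      congrArg (fun z => z.1.1) hxy
    have hc : conjHom a.1 (Quotient.out q) = conjHom b.1 (Quotient.out q) :=
      congrArg Prod.fst hxy'
    have hx : a.1 • a.2.1 = b.1 • b.2.1 := congrArg Prod.snd hxy'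
    have hk : (b.1⁻¹ * a.1) ∈ Subgroup.centralizer (Set.range ⇑(Quotient.out q)) :=
      conjHom_cancel hc
    apply Quot.sound
    refine ⟨⟨b.1⁻¹ * a.1, hk⟩, ?_, ?_⟩
    · show a.1 = b.1 * (b.1⁻¹ * a.1); group
    · apply Subtype.ext
      show b.2.1 = (b.1⁻¹ * a.1) • a.2.1
      rw [mul_smul, hx, inv_smul_smul]
  · rintro ⟨⟨⟨α, x⟩, hx⟩, hq⟩
    obtain ⟨g, hg⟩ : ∃ g : G, α = conjHom g (Quotient.out q) := by
      have := Quotient.mk_out (s := conjSetoid Γ G) α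
      rw [hq] at this
      -- this : Quotient.out q ≈ α? need direction
      exact this
    subst hg
    have hy : ∀ γ : Γ, (Quotient.out q) γ • g⁻¹ • x = g⁻¹ • x := by
      intro γ
      have := hx γ
      rw [conjHom_apply, mul_smul, mul_smul] at this
      have := congrArg (fun z => g⁻¹ • z) this
      simpa [smul_smul] using this
    refine ⟨Quot.mk _ (g, ⟨g⁻¹ • x, hy⟩), ?_⟩
    apply Subtype.ext; apply Subtype.ext
    show ((conjHom g (Quotient.out q), g • g⁻¹ • x) : (Γ →* G) × X)
        = (conjHom g (Quotient.out q), x)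
    rw [smul_inv_smul]

lemma sigma_mk_fiber_eq {A B : Type*} (f : A → B) (a : A) (b : B) (hb : f a = b) :
    (⟨f a, ⟨a, rfl⟩⟩ : Σ b, {x // f x = b}) = ⟨b, ⟨a, hb⟩⟩ := by subst hb; rfl

end Aux

/-- Any additive invariant `h` on `G`-sets (valued in an abelian
group, additive over disjoint unions and constant on equivariant isomorphism
classes) satisfies
`h(Fix_{Γ,G}(X)) = Σ_{[α] ∈ Hom(Γ,G)/G} h(G ×_{C_G(α(Γ))} X^{α(Γ)})`. -/
theorem stmt9 (Γ G X : Type u) [Group Γ] [Group G] [Finite G] [MulAction G X]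
    [Fintype (Quotient (conjSetoid Γ G))]
    (M : Type*) [AddCommGroup M] (h : GSet G → M)
    (hIso : ∀ Y Z : GSet G,
      (∃ e : Y.carrier ≃ Z.carrier, ∀ g y, e (Y.smul g y) = Z.smul g (e y)) → h Y = h Z)
    (hAdd : ∀ (ι : Type u) (_ : Fintype ι) (Y : ι → GSet G) (Z : GSet G),
      (∃ e : Z.carrier ≃ Σ i, (Y i).carrier,
        ∀ g z, e (Z.smul g z) = ⟨(e z).1, (Y (e z).1).smul g (e z).2⟩) →
      h Z = ∑ᶠ i, h (Y i)) :
    h (fixGSet Γ G X) =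
      ∑ᶠ q : Quotient (conjSetoid Γ G), h (indGSet Γ G X (Quotient.out q)) := by
  have step1 : h (fixGSet Γ G X) = ∑ᶠ q, h (fiberGSet Γ G X q) := by
    apply hAdd _ inferInstance
    refine ⟨(Equiv.sigmaFiberEquiv
      (fun p : FixPts Γ G X => Quotient.mk (conjSetoid Γ G) p.1.1)).symm, ?_⟩
    intro g p
    exact sigma_mk_fiber_eq (fun p : FixPts Γ G X => Quotient.mk (conjSetoid Γ G) p.1.1)
      (fixSmul g p) _ (conj_classes_eq g p.1.1)
  have step2 : ∀ q, h (fiberGSet Γ G X q) = h (indGSet Γ G X (Quotient.out q)) := by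
    intro q
    refine (hIso _ _ ⟨Equiv.ofBijective _ (indToFiber_bij q), ?_⟩).symm
    intro g y
    induction y using Quot.ind with | _ a => ?_
    apply Subtype.ext; apply Subtype.ext
    show ((conjHom (g * a.1) (Quotient.out q), (g * a.1) • a.2.1) : (Γ →* G) × X)
        = (conjHom g (conjHom a.1 (Quotient.out q)), g • a.1 • a.2.1)
    rw [conjHom_mul, mul_smul]
  rw [step1]
  exact finsum_congr step2
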